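/- Let f : ℝ^d → ℝ be twice continuously differentiable with a global minimizer x*, and suppose there exist constants a > 0 and b > 0 such that for all x ∈ ℝ^d, a·(f(x) − f(x*)) + b·‖x − x*‖² ≤ ⟨x − x*, ∇f(x) − ∇f(x*)⟩. Let γ > 0, α > 0, ρ > 0, and let (x(t), p(t), ξ(t)) be a solution of the iKFAD dynamics with initial condition (x₀, p₀, ξ₀) ∈ ℝ^d × ℝ^d × ℝ^d with ξ₀ ≥ 0 componentwise. Then there exist constants κ > 0 and C ≥ 0 such that for all t ≥ 0, f(x(t)) − f(x*) + ‖p(t)‖ + ‖ξ(t)‖ ≤ C·e^{−κt}. -/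

import Mathlib

open RealInnerProductSpace

/-- Componentwise (Hadamard) product of two vectors in `ℝ^d`. -/
noncomputable def cwMul {d : ℕ} (a b : EuclideanSpace ℝ (Fin d)) :
    EuclideanSpace ℝ (Fin d) := WithLp.toLp 2 (fun i => a i * b i)

/-- Componentwise square of a vector in `ℝ^d`. -/
noncomputable def cwSq {d : ℕ} (a : EuclideanSpace ℝ (Fin d)) :
    EuclideanSpace ℝ (Fin d) := WithLp.toLp 2 (fun i => a i ^ 2)

lemma le_init_of_deriv_nonpos (g g' : ℝ → ℝ)
    (hg : ∀ t, 0 ≤ t → HasDerivAt g (g' t) t)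
    (hg' : ∀ t, 0 ≤ t → g' t ≤ 0) :
    ∀ t, 0 ≤ t → g t ≤ g 0 := by
  intro t ht
  have h1 : AntitoneOn g (Set.Ici (0:ℝ)) := by
    apply antitoneOn_of_deriv_nonpos (convex_Ici 0)
    · exact fun s hs => (hg s hs).continuousAt.continuousWithinAt
    · intro s hs
      rw [interior_Ici] at hs
      exact (hg s (le_of_lt hs)).differentiableAt.differentiableWithinAt
    · intro s hs
      rw [interior_Ici] at hs
      rw [(hg s (le_of_lt hs)).deriv]
      exact hg' s (le_of_lt hs)
  exact h1 Set.self_mem_Ici ht ht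

lemma scalar_gronwall (W W' : ℝ → ℝ) (κ : ℝ)
    (hW : ∀ t, 0 ≤ t → HasDerivAt W (W' t) t)
    (hle : ∀ t, 0 ≤ t → W' t ≤ -κ * W t) :
    ∀ t, 0 ≤ t → W t ≤ W 0 * Real.exp (-κ * t) := by
  intro t ht
  have key : ∀ s : ℝ, 0 ≤ s → W s * Real.exp (κ * s) ≤ W 0 := by
    have h := le_init_of_deriv_nonpos (fun s => W s * Real.exp (κ * s))
      (fun s => W' s * Real.exp (κ * s) + W s * (Real.exp (κ * s) * κ)) ?_ ?_
    · intro s hs; simpa using h s hs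
    · intro s hs
      have hexp : HasDerivAt (fun s : ℝ => Real.exp (κ * s)) (Real.exp (κ * s) * κ) s := by
        have := ((hasDerivAt_id' s).const_mul κ).exp
        simpa only [mul_one] using this
      exact (hW s hs).mul hexp
    · intro s hs
      have h1 := hle s hs
      have h2 : (0:ℝ) < Real.exp (κ * s) := Real.exp_pos _
      show W' s * Real.exp (κ * s) + W s * (Real.exp (κ * s) * κ) ≤ 0
      nlinarith [mul_le_mul_of_nonneg_right h1 h2.le]
  have h2 : (0:ℝ) < Real.exp (κ * t) := Real.exp_pos _
  rw [neg_mul, Real.exp_neg, ← div_eq_mul_inv, le_div_iff₀ h2]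
  exact key t ht

lemma inner_cwMul_eq {d : ℕ} (a c : EuclideanSpace ℝ (Fin d)) :
    ⟪c, cwMul a c⟫ = ⟪a, cwSq c⟫ := by
  simp only [PiLp.inner_apply, RCLike.inner_apply, starRingEnd_apply, star_trivial,
    cwMul, cwSq, PiLp.toLp_apply]
  exact Finset.sum_congr rfl fun i _ => by ring

lemma norm_cwMul_le {d : ℕ} (a c : EuclideanSpace ℝ (Fin d)) :
    ‖cwMul a c‖ ≤ ‖a‖ * ‖c‖ := by
  rw [EuclideanSpace.norm_eq, EuclideanSpace.norm_eq, EuclideanSpace.norm_eq,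
    ← Real.sqrt_mul (by positivity)]
  apply Real.sqrt_le_sqrt
  calc ∑ i, ‖cwMul a c i‖ ^ 2 = ∑ i, ‖a i‖ ^ 2 * ‖c i‖ ^ 2 := by
        simp [cwMul, Real.norm_eq_abs, abs_mul, mul_pow]
    _ ≤ ∑ i, (∑ j, ‖a j‖ ^ 2) * ‖c i‖ ^ 2 :=
        Finset.sum_le_sum fun i _ => mul_le_mul_of_nonneg_right
          (Finset.single_le_sum (f := fun j => ‖a j‖ ^ 2) (fun j _ => by positivity)
            (Finset.mem_univ i))
          (by positivity)
    _ = (∑ j, ‖a j‖ ^ 2) * ∑ i, ‖c i‖ ^ 2 := by rw [← Finset.mul_sum]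

lemma sqrt_exp_eq (u : ℝ) : Real.sqrt (Real.exp u) = Real.exp (u / 2) := by
  rw [show Real.exp u = Real.exp (u / 2) ^ 2 by
    rw [sq, ← Real.exp_add]; ring_nf]
  exact Real.sqrt_sq (Real.exp_nonneg _)

set_option maxHeartbeats 4000000 in
/-- Exponential convergence of the continuous iKFAD dynamics
`ẋ = p`, `ṗ = -∇f(x) - γp - ξ ⋆ p`, `ξ̇ = [p]²/ρ - αξ`. -/
theorem ikfad_continuous_exponential_convergence
    (d : ℕ) (f : EuclideanSpace ℝ (Fin d) → ℝ)
    (hf : ContDiff ℝ 2 f)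
    (xstar : EuclideanSpace ℝ (Fin d)) (hmin : ∀ y, f xstar ≤ f y)
    (a b : ℝ) (ha : 0 < a) (hb : 0 < b)
    (hconv : ∀ x : EuclideanSpace ℝ (Fin d),
      a * (f x - f xstar) + b * ‖x - xstar‖ ^ 2 ≤
        ⟪x - xstar, gradient f x - gradient f xstar⟫)
    (γ α ρ : ℝ) (hγ : 0 < γ) (hα : 0 < α) (hρ : 0 < ρ)
    (x p ξ : ℝ → EuclideanSpace ℝ (Fin d))
    (hξ0 : ∀ i, 0 ≤ ξ 0 i)
    (hx : ∀ t, 0 ≤ t → HasDerivAt x (p t) t)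
    (hp : ∀ t, 0 ≤ t → HasDerivAt p
      (-gradient f (x t) - γ • p t - cwMul (ξ t) (p t)) t)
    (hξ : ∀ t, 0 ≤ t → HasDerivAt ξ (ρ⁻¹ • cwSq (p t) - α • ξ t) t) :
    ∃ κ : ℝ, 0 < κ ∧ ∃ C : ℝ, 0 ≤ C ∧ ∀ t : ℝ, 0 ≤ t →
      f (x t) - f xstar + ‖p t‖ + ‖ξ t‖ ≤ C * Real.exp (-κ * t) := by
  have hfd : ∀ z, DifferentiableAt ℝ f z :=
    fun z => (hf.differentiable (by norm_num)).differentiableAt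
  have hgrad0 : gradient f xstar = 0 := by
    have hloc : IsLocalMin f xstar := Filter.Eventually.of_forall hmin
    have h0 := hloc.fderiv_eq_zero
    simp [gradient, h0]
  have hconv' : ∀ z, a * (f z - f xstar) + b * ‖z - xstar‖ ^ 2 ≤
      ⟪z - xstar, gradient f z⟫ := by
    intro z; have h := hconv z; rwa [hgrad0, sub_zero] at h
  have hFnn : ∀ z, 0 ≤ f z - f xstar := fun z => sub_nonneg.2 (hmin z)
  -- derivative of f along x
  have hF : ∀ t, 0 ≤ t → HasDerivAt (fun s => f (x s) - f xstar)
      ⟪gradient f (x t), p t⟫ t := by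
    intro t ht
    have h1 : HasGradientAt f (gradient f (x t)) (x t) := (hfd (x t)).hasGradientAt
    have h2 := (hasGradientAt_iff_hasFDerivAt.mp h1).comp_hasDerivAt t (hx t ht)
    simpa [Function.comp, InnerProductSpace.toDual_apply_apply] using h2.sub_const (f xstar)
  -- the basic Lyapunov function V
  obtain ⟨V, hV_def⟩ : ∃ V : ℝ → ℝ, V = fun s =>
      (f (x s) - f xstar) + (1/2) * ⟪p s, p s⟫ + (ρ/2) * ⟪ξ s, ξ s⟫ := ⟨_, rfl⟩
  have hV : ∀ t, 0 ≤ t → HasDerivAt V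
      (-(γ * ⟪p t, p t⟫) - α * ρ * ⟪ξ t, ξ t⟫) t := by
    intro t ht
    rw [hV_def]
    have h2 := ((hp t ht).inner ℝ (hp t ht)).const_mul (1/2 : ℝ)
    have h3 := ((hξ t ht).inner ℝ (hξ t ht)).const_mul (ρ/2 : ℝ)
    have h := ((hF t ht).add h2).add h3
    convert h using 1
    · rfl
    · rfl
    · rfl
    have e1 : ⟪p t, -gradient f (x t) - γ • p t - cwMul (ξ t) (p t)⟫
        = -⟪gradient f (x t), p t⟫ - γ * ⟪p t, p t⟫ - ⟪ξ t, cwSq (p t)⟫ := by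
      rw [inner_sub_right, inner_sub_right, inner_neg_right, real_inner_smul_right,
        inner_cwMul_eq, real_inner_comm (p t) (gradient f (x t))]
    have e2 : ⟪ξ t, ρ⁻¹ • cwSq (p t) - α • ξ t⟫
        = ρ⁻¹ * ⟪ξ t, cwSq (p t)⟫ - α * ⟪ξ t, ξ t⟫ := by
      rw [inner_sub_right, real_inner_smul_right, real_inner_smul_right]
    have e1' : ⟪-gradient f (x t) - γ • p t - cwMul (ξ t) (p t), p t⟫
        = -⟪gradient f (x t), p t⟫ - γ * ⟪p t, p t⟫ - ⟪ξ t, cwSq (p t)⟫ := by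
      rw [real_inner_comm]; exact e1
    have e2' : ⟪ρ⁻¹ • cwSq (p t) - α • ξ t, ξ t⟫
        = ρ⁻¹ * ⟪ξ t, cwSq (p t)⟫ - α * ⟪ξ t, ξ t⟫ := by
      rw [real_inner_comm]; exact e2
    rw [e1, e1', e2, e2']
    set A := ⟪gradient f (x t), p t⟫
    set P := ⟪p t, p t⟫
    set S := ⟪ξ t, cwSq (p t)⟫
    set X := ⟪ξ t, ξ t⟫
    field_simp
    ring
  -- V is nonincreasing
  have hVmono : ∀ t, 0 ≤ t → V t ≤ V 0 := by
    apply le_init_of_deriv_nonpos V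
      (fun t => -(γ * ⟪p t, p t⟫) - α * ρ * ⟪ξ t, ξ t⟫) hV
    intro t ht
    have h1 : (0:ℝ) ≤ ⟪p t, p t⟫ := real_inner_self_nonneg
    have h2 : (0:ℝ) ≤ ⟪ξ t, ξ t⟫ := real_inner_self_nonneg
    linarith [mul_nonneg hγ.le h1, mul_nonneg (mul_nonneg hα.le hρ.le) h2]
  -- bound on ‖ξ‖
  obtain ⟨M, hM_def⟩ : ∃ M : ℝ, M = Real.sqrt (2 / ρ * V 0) := ⟨_, rfl⟩
  have hMnn : 0 ≤ M := hM_def ▸ Real.sqrt_nonneg _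
  have hMbound : ∀ t, 0 ≤ t → ‖ξ t‖ ≤ M := by
    intro t ht
    have h2 := hVmono t ht
    have h6 : ρ / 2 * ‖ξ t‖ ^ 2 ≤ V t := by
      have h3 := hFnn (x t)
      have h4 : (0:ℝ) ≤ ⟪p t, p t⟫ := real_inner_self_nonneg
      have h5 : ⟪ξ t, ξ t⟫ = ‖ξ t‖ ^ 2 := real_inner_self_eq_norm_sq _
      rw [hV_def]
      dsimp only
      rw [h5]
      linarith
    have h1 : ‖ξ t‖ ^ 2 ≤ 2 / ρ * V 0 := by
      rw [div_mul_eq_mul_div, le_div_iff₀ hρ]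
      linarith
    calc ‖ξ t‖ = Real.sqrt (‖ξ t‖ ^ 2) := (Real.sqrt_sq (norm_nonneg _)).symm
      _ ≤ M := hM_def ▸ Real.sqrt_le_sqrt h1
  -- choose ε
  obtain ⟨ε, hε_def⟩ : ∃ ε : ℝ, ε = min (γ / 2) (γ * b / (2 * M ^ 2 + 1)) := ⟨_, rfl⟩
  have hε : 0 < ε := by
    rw [hε_def]
    exact lt_min (half_pos hγ) (div_pos (mul_pos hγ hb) (by positivity))
  have hε1 : ε ≤ γ / 2 := hε_def ▸ min_le_left _ _
  have hε2 : ε * M ^ 2 ≤ γ * b / 2 := by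
    have h1 : ε ≤ γ * b / (2 * M ^ 2 + 1) := hε_def ▸ min_le_right _ _
    have h2 : (0:ℝ) < 2 * M ^ 2 + 1 := by positivity
    have h3 : ε * (2 * M ^ 2 + 1) ≤ γ * b := by
      calc ε * (2 * M ^ 2 + 1) ≤ γ * b / (2 * M ^ 2 + 1) * (2 * M ^ 2 + 1) :=
            mul_le_mul_of_nonneg_right h1 h2.le
        _ = γ * b := by field_simp
    linarith [hε.le]
  -- the full Lyapunov function W
  obtain ⟨y, hy_def⟩ : ∃ y : ℝ → EuclideanSpace ℝ (Fin d),
      y = fun s => x s - xstar := ⟨_, rfl⟩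
  have hy : ∀ t, 0 ≤ t → HasDerivAt y (p t) t := by
    intro t ht; rw [hy_def]; exact (hx t ht).sub_const xstar
  obtain ⟨W, hW_def⟩ : ∃ W : ℝ → ℝ, W = fun s =>
      V s + ε * ⟪y s, p s⟫ + (ε * γ / 2) * ⟪y s, y s⟫ := ⟨_, rfl⟩
  obtain ⟨W', hW'_def⟩ : ∃ W' : ℝ → ℝ, W' = fun s =>
      -((γ - ε) * ⟪p s, p s⟫) - α * ρ * ⟪ξ s, ξ s⟫
        - ε * ⟪y s, gradient f (x s)⟫ - ε * ⟪y s, cwMul (ξ s) (p s)⟫ := ⟨_, rfl⟩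
  have hW : ∀ t, 0 ≤ t → HasDerivAt W (W' t) t := by
    intro t ht
    rw [hW_def, hW'_def]
    have h2 := ((hy t ht).inner ℝ (hp t ht)).const_mul ε
    have h3 := ((hy t ht).inner ℝ (hy t ht)).const_mul (ε * γ / 2)
    have h := ((hV t ht).add h2).add h3
    convert h using 1
    · rfl
    · rfl
    · rfl
    have e1 : ⟪y t, -gradient f (x t) - γ • p t - cwMul (ξ t) (p t)⟫
        = -⟪y t, gradient f (x t)⟫ - γ * ⟪y t, p t⟫ - ⟪y t, cwMul (ξ t) (p t)⟫ := by
      rw [inner_sub_right, inner_sub_right, inner_neg_right, real_inner_smul_right]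
    have e2 : ⟪p t, y t⟫ = ⟪y t, p t⟫ := real_inner_comm _ _
    rw [e1, e2]
    ring
  -- choose κ
  obtain ⟨κ, hκ_def⟩ : ∃ κ : ℝ,
      κ = min (min (ε * a) (γ / (2 * (1 + ε)))) (min (2 * α) (b / (1 + γ))) := ⟨_, rfl⟩
  have hκ : 0 < κ := by
    rw [hκ_def]
    exact lt_min (lt_min (mul_pos hε ha) (div_pos hγ (by linarith)))
      (lt_min (by linarith) (div_pos hb (by linarith)))
  have hκ1 : κ ≤ ε * a := hκ_def ▸ le_trans (min_le_left _ _) (min_le_left _ _)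
  have hκ2 : κ * (1 + ε) ≤ γ / 2 := by
    have h1 : κ ≤ γ / (2 * (1 + ε)) :=
      hκ_def ▸ le_trans (min_le_left _ _) (min_le_right _ _)
    have h2 : (0:ℝ) < 1 + ε := by linarith
    calc κ * (1 + ε) ≤ γ / (2 * (1 + ε)) * (1 + ε) := mul_le_mul_of_nonneg_right h1 h2.le
      _ = γ / 2 := by field_simp
  have hκ3 : κ ≤ 2 * α := hκ_def ▸ le_trans (min_le_right _ _) (min_le_left _ _)
  have hκ4 : κ * (1 + γ) ≤ b := by
    have h1 : κ ≤ b / (1 + γ) := hκ_def ▸ le_trans (min_le_right _ _) (min_le_right _ _)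
    have h2 : (0:ℝ) < 1 + γ := by linarith
    calc κ * (1 + γ) ≤ b / (1 + γ) * (1 + γ) := mul_le_mul_of_nonneg_right h1 h2.le
      _ = b := by field_simp
  -- W' ≤ -κ W
  have hWineq : ∀ t, 0 ≤ t → W' t ≤ -κ * W t := by
    intro t ht
    have hP : ⟪p t, p t⟫ = ‖p t‖ ^ 2 := real_inner_self_eq_norm_sq _
    have hY : ⟪y t, y t⟫ = ‖y t‖ ^ 2 := real_inner_self_eq_norm_sq _
    have hΞ : ⟪ξ t, ξ t⟫ = ‖ξ t‖ ^ 2 := real_inner_self_eq_norm_sq _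
    have hFt : 0 ≤ f (x t) - f xstar := hFnn (x t)
    have hG : a * (f (x t) - f xstar) + b * ‖y t‖ ^ 2 ≤ ⟪y t, gradient f (x t)⟫ := by
      rw [hy_def]; exact hconv' (x t)
    have hZ : -⟪y t, cwMul (ξ t) (p t)⟫ ≤ M * (‖y t‖ * ‖p t‖) := by
      have h1 : -⟪y t, cwMul (ξ t) (p t)⟫ ≤ ‖y t‖ * ‖cwMul (ξ t) (p t)‖ :=
        le_trans (neg_le_abs _) (abs_real_inner_le_norm _ _)
      have h2 : ‖cwMul (ξ t) (p t)‖ ≤ M * ‖p t‖ :=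
        le_trans (norm_cwMul_le _ _)
          (mul_le_mul_of_nonneg_right (hMbound t ht) (norm_nonneg _))
      calc -⟪y t, cwMul (ξ t) (p t)⟫ ≤ ‖y t‖ * ‖cwMul (ξ t) (p t)‖ := h1
        _ ≤ ‖y t‖ * (M * ‖p t‖) := mul_le_mul_of_nonneg_left h2 (norm_nonneg _)
        _ = M * (‖y t‖ * ‖p t‖) := by ring
    have hI1 : -⟪y t, p t⟫ ≤ ‖y t‖ * ‖p t‖ :=
      le_trans (neg_le_abs _) (abs_real_inner_le_norm _ _)
    have hI2 : ⟪y t, p t⟫ ≤ ‖y t‖ * ‖p t‖ :=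
      le_trans (le_abs_self _) (abs_real_inner_le_norm _ _)
    -- AM-GM bounds
    have hAM1 : M * (‖y t‖ * ‖p t‖) ≤ b / 2 * ‖y t‖ ^ 2 + M ^ 2 / (2 * b) * ‖p t‖ ^ 2 := by
      rw [← mul_le_mul_iff_right₀ (show (0:ℝ) < 2 * b by positivity)]
      have expand : 2 * b * (b / 2 * ‖y t‖ ^ 2 + M ^ 2 / (2 * b) * ‖p t‖ ^ 2)
          = b ^ 2 * ‖y t‖ ^ 2 + M ^ 2 * ‖p t‖ ^ 2 := by field_simp
      rw [expand]
      nlinarith [sq_nonneg (b * ‖y t‖ - M * ‖p t‖)]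
    have hAM2 : ‖y t‖ * ‖p t‖ ≤ (‖y t‖ ^ 2 + ‖p t‖ ^ 2) / 2 := by
      nlinarith [sq_nonneg (‖y t‖ - ‖p t‖)]
    -- coefficient bounds
    have hc1 : 0 ≤ γ - ε - γ / 4 - κ / 2 - κ * ε / 2 := by linarith [hκ2, hε1]
    have hc2 : 0 ≤ ρ * (α - κ / 2) := mul_nonneg hρ.le (by linarith)
    have hc3 : 0 ≤ ε * a - κ := by linarith
    have hc4 : 0 ≤ ε * (b / 2 - κ / 2 - κ * γ / 2) := mul_nonneg hε.le (by linarith [hκ4])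
    have hεZ : -(ε * ⟪y t, cwMul (ξ t) (p t)⟫)
        ≤ ε * b / 2 * ‖y t‖ ^ 2 + γ / 4 * ‖p t‖ ^ 2 := by
      have h1 : ε * (-⟪y t, cwMul (ξ t) (p t)⟫) ≤ ε * (M * (‖y t‖ * ‖p t‖)) :=
        mul_le_mul_of_nonneg_left hZ hε.le
      have h2 : ε * (M * (‖y t‖ * ‖p t‖))
          ≤ ε * (b / 2 * ‖y t‖ ^ 2 + M ^ 2 / (2 * b) * ‖p t‖ ^ 2) :=
        mul_le_mul_of_nonneg_left hAM1 hε.le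
      have h3 : ε * (M ^ 2 / (2 * b)) ≤ γ / 4 := by
        rw [mul_div_assoc', div_le_div_iff₀ (by positivity) (by norm_num)]
        nlinarith [hε2]
      have h4 := mul_le_mul_of_nonneg_right h3 (sq_nonneg ‖p t‖)
      linarith [h1, h2, h4]
    have hκεI : κ * (ε * ⟪y t, p t⟫)
        ≤ κ * ε / 2 * ‖y t‖ ^ 2 + κ * ε / 2 * ‖p t‖ ^ 2 := by
      have h1 : κ * ε * ⟪y t, p t⟫ ≤ κ * ε * ((‖y t‖ ^ 2 + ‖p t‖ ^ 2) / 2) :=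
        mul_le_mul_of_nonneg_left (le_trans hI2 hAM2) (by positivity)
      linarith [h1]
    have hεG : ε * (a * (f (x t) - f xstar) + b * ‖y t‖ ^ 2)
        ≤ ε * ⟪y t, gradient f (x t)⟫ := mul_le_mul_of_nonneg_left hG hε.le
    rw [hW'_def, hW_def, hV_def]
    dsimp only
    rw [hP, hY, hΞ]
    linarith [mul_nonneg hc1 (sq_nonneg ‖p t‖), mul_nonneg hc2 (sq_nonneg ‖ξ t‖),
      mul_nonneg hc3 hFt, mul_nonneg hc4 (sq_nonneg ‖y t‖), hεZ, hκεI, hεG]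
  -- Gronwall
  have hgron := scalar_gronwall W W' κ hW hWineq
  -- lower bound for W
  have hlow : ∀ t, 0 ≤ t → (f (x t) - f xstar) + (1/4) * ‖p t‖ ^ 2
      + (ρ/2) * ‖ξ t‖ ^ 2 ≤ W t := by
    intro t ht
    have hP : ⟪p t, p t⟫ = ‖p t‖ ^ 2 := real_inner_self_eq_norm_sq _
    have hY : ⟪y t, y t⟫ = ‖y t‖ ^ 2 := real_inner_self_eq_norm_sq _
    have hΞ : ⟪ξ t, ξ t⟫ = ‖ξ t‖ ^ 2 := real_inner_self_eq_norm_sq _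
    have hI1 : -⟪y t, p t⟫ ≤ ‖y t‖ * ‖p t‖ :=
      le_trans (neg_le_abs _) (abs_real_inner_le_norm _ _)
    have hAM : γ * (‖y t‖ * ‖p t‖) ≤ γ ^ 2 / 2 * ‖y t‖ ^ 2 + 1 / 2 * ‖p t‖ ^ 2 := by
      nlinarith [sq_nonneg (γ * ‖y t‖ - ‖p t‖)]
    have hεI : -(ε * ⟪y t, p t⟫) ≤ ε * γ / 2 * ‖y t‖ ^ 2 + 1 / 4 * ‖p t‖ ^ 2 := by
      have h1 : ε * (-⟪y t, p t⟫) ≤ ε * (‖y t‖ * ‖p t‖) :=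
        mul_le_mul_of_nonneg_left hI1 hε.le
      have h2 : (ε / γ) * (γ * (‖y t‖ * ‖p t‖))
          ≤ (ε / γ) * (γ ^ 2 / 2 * ‖y t‖ ^ 2 + 1 / 2 * ‖p t‖ ^ 2) :=
        mul_le_mul_of_nonneg_left hAM (by positivity)
      have h3 : (ε / γ) * (γ * (‖y t‖ * ‖p t‖)) = ε * (‖y t‖ * ‖p t‖) := by
        field_simp
      have h4 : (ε / γ) * (γ ^ 2 / 2 * ‖y t‖ ^ 2) = ε * γ / 2 * ‖y t‖ ^ 2 := by
        field_simp
      have h5 : (ε / γ) * (1 / 2 * ‖p t‖ ^ 2) ≤ 1 / 4 * ‖p t‖ ^ 2 := by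
        have h6 : ε / γ ≤ 1 / 2 := by
          rw [div_le_div_iff₀ hγ (by norm_num)]; linarith
        have h7 := mul_le_mul_of_nonneg_right h6 (sq_nonneg ‖p t‖)
        linarith [h7]
      linarith [h1, h2, h3, h4, h5]
    rw [hW_def, hV_def]
    dsimp only
    rw [hP, hY, hΞ]
    linarith [hεI]
  -- assemble the final bound
  have hW0 : 0 ≤ W 0 := by
    have h := hlow 0 le_rfl
    linarith [sq_nonneg ‖p 0‖, hFnn (x 0), mul_nonneg hρ.le (sq_nonneg ‖ξ 0‖)]
  refine ⟨κ / 2, half_pos hκ, W 0 + Real.sqrt (4 * W 0) + Real.sqrt (2 * W 0 / ρ),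
    add_nonneg (add_nonneg hW0 (Real.sqrt_nonneg _)) (Real.sqrt_nonneg _), ?_⟩
  intro t ht
  have hWt := hgron t ht
  have hlowt := hlow t ht
  obtain ⟨E, hE_def⟩ : ∃ E : ℝ, E = Real.exp (-(κ/2) * t) := ⟨_, rfl⟩
  have hE1 : E ≤ 1 := by
    rw [hE_def]
    exact Real.exp_le_one_iff.mpr (by nlinarith [mul_nonneg hκ.le ht])
  have hEpos : 0 < E := hE_def ▸ Real.exp_pos _
  have hEE : Real.exp (-κ * t) = E ^ 2 := by
    rw [hE_def, sq, ← Real.exp_add]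
    congr 1
    ring
  have hWle : W t ≤ W 0 * E ^ 2 := by rw [← hEE]; exact hWt
  have hρΞ : 0 ≤ ρ / 2 * ‖ξ t‖ ^ 2 := by positivity
  have hfb : f (x t) - f xstar ≤ W 0 * E ^ 2 := by
    linarith [sq_nonneg ‖p t‖]
  have hpb : ‖p t‖ ≤ Real.sqrt (4 * W 0) * E := by
    have h1 : ‖p t‖ ^ 2 ≤ 4 * W 0 * E ^ 2 := by
      linarith [hFnn (x t)]
    have h2 : ‖p t‖ ^ 2 ≤ (Real.sqrt (4 * W 0) * E) ^ 2 := by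
      rw [mul_pow, Real.sq_sqrt (by positivity)]; exact h1
    calc ‖p t‖ = Real.sqrt (‖p t‖ ^ 2) := (Real.sqrt_sq (norm_nonneg _)).symm
      _ ≤ Real.sqrt ((Real.sqrt (4 * W 0) * E) ^ 2) := Real.sqrt_le_sqrt h2
      _ = Real.sqrt (4 * W 0) * E := Real.sqrt_sq (by positivity)
  have hξb : ‖ξ t‖ ≤ Real.sqrt (2 * W 0 / ρ) * E := by
    have h1 : ‖ξ t‖ ^ 2 ≤ 2 * W 0 / ρ * E ^ 2 := by
      rw [div_mul_eq_mul_div, le_div_iff₀ hρ]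
      linarith [hFnn (x t), sq_nonneg ‖p t‖]
    have h2 : ‖ξ t‖ ^ 2 ≤ (Real.sqrt (2 * W 0 / ρ) * E) ^ 2 := by
      rw [mul_pow, Real.sq_sqrt (by positivity)]; exact h1
    calc ‖ξ t‖ = Real.sqrt (‖ξ t‖ ^ 2) := (Real.sqrt_sq (norm_nonneg _)).symm
      _ ≤ Real.sqrt ((Real.sqrt (2 * W 0 / ρ) * E) ^ 2) := Real.sqrt_le_sqrt h2
      _ = Real.sqrt (2 * W 0 / ρ) * E := Real.sqrt_sq (by positivity)
  have hfb2 : f (x t) - f xstar ≤ W 0 * E := by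
    have hE2 : W 0 * E ^ 2 ≤ W 0 * E := by
      nlinarith [mul_nonneg hW0 (mul_nonneg hEpos.le (sub_nonneg.2 hE1))]
    linarith
  have hEeq : Real.exp (-(κ / 2) * t) = E := hE_def.symm
  rw [hEeq]
  calc f (x t) - f xstar + ‖p t‖ + ‖ξ t‖
      ≤ W 0 * E + Real.sqrt (4 * W 0) * E + Real.sqrt (2 * W 0 / ρ) * E := by
        linarith
    _ = (W 0 + Real.sqrt (4 * W 0) + Real.sqrt (2 * W 0 / ρ)) * E := by ring
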